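/- Let F = F_{q^k} be a finite field, α a primitive element of F, and C an element of the field F_{q^{kt}} of multiplicative order r = (q^{kt}−1)/(q^k−1), with gcd(r, q^k − 1) = 1. For integers a, b ∈ {1, …, q^{kt}−1} define D_{a,b} = ∑_{j=1}^{a} α^{j−1} C^{a+b−j} − ∑_{j=1}^{b} α^{j−1} C^{a+b−j} (an element of F_{q^{kt}}). Then D_{a,b} = 0 if and only if a = b. -/

import Mathlib

theorem D_ab_eq_zero_iff (q k t : ℕ) (hq : 2 ≤ q) (hk : 1 ≤ k) (ht : 1 ≤ t)
    (E : Type*) [Field E]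
    (α C : E)
    (hα : orderOf α = q ^ k - 1)
    (hC : orderOf C = (q ^ (k * t) - 1) / (q ^ k - 1))
    (hcop : Nat.Coprime ((q ^ (k * t) - 1) / (q ^ k - 1)) (q ^ k - 1))
    (hr : ((q ^ (k * t) - 1) / (q ^ k - 1)) * (q ^ k - 1) = q ^ (k * t) - 1)
    (D : ℕ → ℕ → E)
    (hD : ∀ a b, D a b = (∑ j ∈ Finset.Icc 1 a, α ^ (j - 1) * C ^ (a + b - j))
        - (∑ j ∈ Finset.Icc 1 b, α ^ (j - 1) * C ^ (a + b - j)))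
    (a b : ℕ) (ha : a ∈ Finset.Icc 1 (q ^ (k * t) - 1)) (hb : b ∈ Finset.Icc 1 (q ^ (k * t) - 1)) :
    D a b = 0 ↔ a = b := by
  have hqk : 1 < q ^ k := Nat.one_lt_pow (by omega) (by omega)
  have hN : 1 < q ^ (k * t) := Nat.one_lt_pow (by positivity) (by omega)
  have hs0 : q ^ k - 1 ≠ 0 := by omega
  have hN0 : q ^ (k * t) - 1 ≠ 0 := by omega
  have hr0 : (q ^ (k * t) - 1) / (q ^ k - 1) ≠ 0 := by
    intro h; rw [h, zero_mul] at hr; omega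
  have hα0 : α ≠ 0 := by
    intro h
    have := pow_orderOf_eq_one α
    rw [hα, h, zero_pow hs0] at this
    exact zero_ne_one this
  have hC0 : C ≠ 0 := by
    intro h
    have := pow_orderOf_eq_one C
    rw [hC, h, zero_pow hr0] at this
    exact zero_ne_one this
  -- order of x = α * C⁻¹ is q^(kt) - 1
  set x : E := α * C⁻¹ with hx
  have hinv : orderOf C⁻¹ = orderOf C := by
    simp [orderOf_eq_orderOf_iff, inv_pow, inv_eq_one]
  have hxord : orderOf x = q ^ (k * t) - 1 := by
    have hcomm : Commute α C⁻¹ := Commute.all _ _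
    have := hcomm.orderOf_mul_eq_mul_orderOf_of_coprime
      (by rw [hα, hinv, hC]; exact hcop.symm)
    rw [this, hα, hinv, hC, mul_comm, hr]
  have key : ∀ a b : ℕ, 1 ≤ b → b < a → a ≤ q ^ (k * t) - 1 → D a b ≠ 0 := by
    intro a b hb1 hab haN
    rw [hD]
    have hsplit : (∑ j ∈ Finset.Icc 1 a, α ^ (j - 1) * C ^ (a + b - j))
        - (∑ j ∈ Finset.Icc 1 b, α ^ (j - 1) * C ^ (a + b - j))
        = ∑ j ∈ Finset.Ioc b a, α ^ (j - 1) * C ^ (a + b - j) := by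
      rw [show Finset.Icc 1 a = Finset.Ioc 0 a from Finset.Icc_add_one_left_eq_Ioc 0 a,
          show Finset.Icc 1 b = Finset.Ioc 0 b from Finset.Icc_add_one_left_eq_Ioc 0 b,
          ← Finset.sum_Ioc_consecutive _ (Nat.zero_le b) (le_of_lt hab)]
      ring
    rw [hsplit]
    have hreindex : ∑ j ∈ Finset.Ioc b a, α ^ (j - 1) * C ^ (a + b - j)
        = ∑ i ∈ Finset.range (a - b), α ^ (b + 1 + i - 1) * C ^ (a + b - (b + 1 + i)) := by
      rw [← Finset.Ico_add_one_add_one_eq_Ioc, Finset.sum_Ico_eq_sum_range,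
        show a + 1 - (b + 1) = a - b from by omega]
    rw [hreindex]
    have hterm : ∀ i ∈ Finset.range (a - b),
        α ^ (b + 1 + i - 1) * C ^ (a + b - (b + 1 + i)) = (α ^ b * C ^ (a - 1)) * x ^ i := by
      intro i hi
      rw [Finset.mem_range] at hi
      have h1 : b + 1 + i - 1 = b + i := by omega
      have h2 : a + b - (b + 1 + i) = a - 1 - i := by omega
      have h3 : a - 1 = (a - 1 - i) + i := by omega
      rw [h1, h2, hx, mul_pow, inv_pow, pow_add, h3, pow_add]
      field_simp
      ring
      rw [Nat.add_sub_cancel]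
    rw [Finset.sum_congr rfl hterm, ← Finset.mul_sum]
    have hn1 : 1 ≤ a - b := by omega
    have hnN : a - b < q ^ (k * t) - 1 := by omega
    have hx1 : x ≠ 1 := by
      intro h
      rw [h, orderOf_one] at hxord
      omega
    rw [geom_sum_eq hx1]
    apply mul_ne_zero (mul_ne_zero (pow_ne_zero _ hα0) (pow_ne_zero _ hC0))
    apply div_ne_zero
    · rw [sub_ne_zero]
      intro h
      have := orderOf_dvd_iff_pow_eq_one.mpr h
      rw [hxord] at this
      have := Nat.le_of_dvd (by omega) this
      omega
    · rwa [sub_ne_zero]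
  simp only [Finset.mem_Icc] at ha hb
  constructor
  · intro h0
    rcases lt_trichotomy a b with h | h | h
    · exfalso
      apply key b a ha.1 h hb.2
      have : D b a = - D a b := by rw [hD, hD, Nat.add_comm b a]; ring
      rw [this, h0, neg_zero]
    · exact h
    · exact absurd h0 (key a b hb.1 h ha.2)
  · intro h; subst h; rw [hD]; exact sub_self _
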